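/- Let X be a real Hilbert space, U_M ⊂ X a finite-dimensional subspace, and ℓ_1,…,ℓ_M ∈ X' unisolvent on U_M. Let I_M be the interpolation operator onto U_M and W_M = span{R_X ℓ_m}_{m=1}^M. Then the operator norm of I_M equals the reciprocal of the inf-sup constant γ_M = inf_{w ∈ U_M, w≠0} sup_{v ∈ W_M, v≠0} (w,v)/(‖w‖‖v‖); that is, ‖I_M‖_{L(X)} = 1/γ_M. -/

import Mathlib

open RealInnerProductSpace

/-- the operator norm of the interpolation operator (the Lebesgue constant)
equals the reciprocal of the inf-sup constant `γ_M`. -/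
theorem stmt_19 {X : Type*} [NormedAddCommGroup X] [InnerProductSpace ℝ X] [CompleteSpace X]
    {M : ℕ} (U : Submodule ℝ X) [FiniteDimensional ℝ U]
    (hUdim : Module.finrank ℝ U = M)
    (ℓ : Fin M → (X →L[ℝ] ℝ)) (hli : LinearIndependent ℝ ℓ)
    (huni : ∀ ψ ∈ U, (∀ m, ℓ m ψ = 0) → ψ = 0)
    (W : Submodule ℝ X)
    (hW : W = Submodule.span ℝ
      (Set.range fun m => (InnerProductSpace.toDual ℝ X).symm (ℓ m)))
    (I : X →L[ℝ] X)
    (hIU : ∀ u : X, I u ∈ U)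
    (hI : ∀ (u : X) (m : Fin M), ℓ m (I u) = ℓ m u) :
    ‖I‖ = 1 / sInf {r : ℝ | ∃ w ∈ U, w ≠ 0 ∧
      r = sSup {s : ℝ | ∃ v ∈ W, v ≠ 0 ∧ s = ⟪w, v⟫ / (‖w‖ * ‖v‖)}} := by
  classical
  have hrinner : ∀ (m : Fin M) (x : X),
      ⟪(InnerProductSpace.toDual ℝ X).symm (ℓ m), x⟫ = ℓ m x := fun m x =>
    InnerProductSpace.toDual_symm_apply
  haveI hWfd : FiniteDimensional ℝ W := by
    rw [hW]; exact FiniteDimensional.span_of_finite ℝ (Set.finite_range _)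
  -- characterization of `Wᗮ`
  have hperp : ∀ x : X, x ∈ Wᗮ ↔ ∀ m, ℓ m x = 0 := by
    intro x
    constructor
    · intro hx m
      rw [← hrinner]
      exact Submodule.inner_right_of_mem_orthogonal
        (by rw [hW]; exact Submodule.subset_span (Set.mem_range_self m)) hx
    · intro h
      rw [Submodule.mem_orthogonal]
      intro u hu
      rw [hW] at hu
      have hsub : Set.range (fun m => (InnerProductSpace.toDual ℝ X).symm (ℓ m))
          ⊆ ((ℝ ∙ x)ᗮ : Submodule ℝ X) := by
        rintro _ ⟨m, rfl⟩
        simp only [SetLike.mem_coe]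
        rw [Submodule.mem_orthogonal_singleton_iff_inner_left]
        rw [hrinner]
        exact h m
      have := (Submodule.span_le.mpr hsub) hu
      rwa [Submodule.mem_orthogonal_singleton_iff_inner_left] at this
  set P : X →L[ℝ] W := Submodule.orthogonalProjectionOnto W with hPdef
  have hPnorm : ∀ x : X, ‖(P x : X)‖ ≤ ‖x‖ := by
    intro x
    calc ‖(P x : X)‖ = ‖P x‖ := rfl
    _ ≤ ‖P‖ * ‖x‖ := P.le_opNorm x
    _ ≤ 1 * ‖x‖ := mul_le_mul_of_nonneg_right (Submodule.orthogonalProjectionOnto_norm_le W) (norm_nonneg x)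
    _ = ‖x‖ := one_mul _
  have hPz : ∀ x : X, x ∈ Wᗮ → P x = 0 := fun x hx =>
    Submodule.orthogonalProjectionOnto_eq_zero_iff.mpr hx
  -- I is the identity on U
  have hIid : ∀ u ∈ U, I u = u := by
    intro u hu
    have h1 : I u - u ∈ U := Submodule.sub_mem U (hIU u) hu
    have h2 : ∀ m, ℓ m (I u - u) = 0 := by
      intro m; rw [map_sub, hI u m, sub_self]
    have := huni _ h1 h2
    exact sub_eq_zero.mp this
  -- x - I x ∈ Wᗮ
  have hker : ∀ x : X, x - I x ∈ Wᗮ := by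
    intro x
    rw [hperp]
    intro m; rw [map_sub, hI x m, sub_self]
  have hPI : ∀ x : X, P (I x) = P x := by
    intro x
    have h0 := hPz _ (hker x)
    rw [map_sub, sub_eq_zero] at h0
    exact h0.symm
  -- nonvanishing of the projection on U \ {0}
  have hPne : ∀ w : X, w ∈ U → w ≠ 0 → (P w : X) ≠ 0 := by
    intro w hwU hwne hc
    have h0 : P w = 0 := by exact_mod_cast Submodule.coe_eq_zero.mp (by exact_mod_cast hc)
    have : w ∈ Wᗮ := Submodule.orthogonalProjectionOnto_eq_zero_iff.mp h0
    exact hwne (huni w hwU ((hperp w).mp this))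
  -- the inner sup equals ‖P w‖ / ‖w‖
  have hsup : ∀ w : X, w ∈ U → w ≠ 0 →
      sSup {s : ℝ | ∃ v ∈ W, v ≠ 0 ∧ s = ⟪w, v⟫ / (‖w‖ * ‖v‖)}
        = ‖(P w : X)‖ / ‖w‖ := by
    intro w hwU hwne
    have hPw : (P w : X) ≠ 0 := hPne w hwU hwne
    have hnw : (0:ℝ) < ‖w‖ := norm_pos_iff.mpr hwne
    have hnPw : (0:ℝ) < ‖(P w : X)‖ := norm_pos_iff.mpr hPw
    apply IsGreatest.csSup_eq
    constructor
    · refine ⟨(P w : X), (P w).2, hPw, ?_⟩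
      have hinner : ⟪w, (P w : X)⟫ = ‖(P w : X)‖ * ‖(P w : X)‖ := by
        have h1 : ⟪w - (P w : X), (P w : X)⟫ = 0 :=
          Submodule.inner_left_of_mem_orthogonal (P w).2
            (Submodule.sub_starProjection_mem_orthogonal (K := W) w)
        have h2 : ⟪(P w : X), (P w : X)⟫ = ‖(P w : X)‖ * ‖(P w : X)‖ :=
          real_inner_self_eq_norm_mul_norm _
        rw [inner_sub_left] at h1
        linarith
      rw [hinner]
      field_simp
    · rintro s ⟨v, hvW, hvne, rfl⟩
      have hnv : (0:ℝ) < ‖v‖ := norm_pos_iff.mpr hvne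
      have h1 : ⟪w, v⟫ = ⟪(P w : X), v⟫ := by
        have h0 : ⟪w - (P w : X), v⟫ = 0 :=
          Submodule.inner_left_of_mem_orthogonal hvW
            (Submodule.sub_starProjection_mem_orthogonal (K := W) w)
        rw [inner_sub_left] at h0
        linarith
      have h2 : ⟪w, v⟫ ≤ ‖(P w : X)‖ * ‖v‖ := by
        rw [h1]; exact real_inner_le_norm _ _
      rw [div_le_div_iff₀ (by positivity) hnw]
      calc ⟪w, v⟫ * ‖w‖ ≤ (‖(P w : X)‖ * ‖v‖) * ‖w‖ :=
            mul_le_mul_of_nonneg_right h2 (norm_nonneg w)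
        _ = ‖(P w : X)‖ * (‖w‖ * ‖v‖) := by ring
  -- rewrite the set in the statement
  have hset : {r : ℝ | ∃ w ∈ U, w ≠ 0 ∧
      r = sSup {s : ℝ | ∃ v ∈ W, v ≠ 0 ∧ s = ⟪w, v⟫ / (‖w‖ * ‖v‖)}}
      = {r : ℝ | ∃ w ∈ U, w ≠ 0 ∧ r = ‖(P w : X)‖ / ‖w‖} := by
    ext r
    constructor
    · rintro ⟨w, hwU, hwne, rfl⟩
      exact ⟨w, hwU, hwne, hsup w hwU hwne⟩
    · rintro ⟨w, hwU, hwne, rfl⟩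
      exact ⟨w, hwU, hwne, (hsup w hwU hwne).symm⟩
  rw [hset]
  -- trivial case M = 0
  rcases Nat.eq_zero_or_pos M with hM | hM
  · have hUbot : U = ⊥ := Submodule.finrank_eq_zero.mp (by rw [hUdim, hM])
    have hI0 : I = 0 := by
      ext x
      have := hIU x
      rw [hUbot, Submodule.mem_bot] at this
      simpa using this
    have hempty : {r : ℝ | ∃ w ∈ U, w ≠ 0 ∧ r = ‖(P w : X)‖ / ‖w‖} = ∅ := by
      ext r
      simp only [Set.mem_empty_iff_false, iff_false, Set.mem_setOf_eq]
      rintro ⟨w, hwU, hwne, -⟩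
      rw [hUbot, Submodule.mem_bot] at hwU
      exact hwne hwU
    rw [hI0, hempty, Real.sInf_empty]
    simp
  -- main case M ≥ 1
  · haveI : Nontrivial U := by
      exact Module.nontrivial_of_finrank_pos (R := ℝ) (by rw [hUdim]; exact hM)
    -- minimize ‖P w‖ over the unit sphere of U
    have hcont : Continuous fun u : U => ‖(P (u : X) : X)‖ :=
      Continuous.norm (Continuous.subtype_val (P.continuous.comp continuous_subtype_val))
    have hsphne : (Metric.sphere (0:U) 1).Nonempty :=
      NormedSpace.sphere_nonempty.mpr zero_le_one
    obtain ⟨w₀, hw₀s, hmin⟩ := (isCompact_sphere (0:U) 1).exists_isMinOn hsphne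
      hcont.continuousOn
    have hw₀norm : ‖(w₀ : X)‖ = 1 := by
      have : ‖w₀‖ = 1 := by simpa using mem_sphere_zero_iff_norm.mp hw₀s
      simpa using this
    have hw₀ne : (w₀ : X) ≠ 0 := by
      intro h; rw [h] at hw₀norm; simp at hw₀norm
    set γ : ℝ := ‖(P (w₀ : X) : X)‖ with hγ
    have hγpos : 0 < γ := norm_pos_iff.mpr (hPne _ w₀.2 hw₀ne)
    have hleast : IsLeast {r : ℝ | ∃ w ∈ U, w ≠ 0 ∧ r = ‖(P w : X)‖ / ‖w‖} γ := by
      constructor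
      · exact ⟨(w₀ : X), w₀.2, hw₀ne, by rw [hw₀norm]; simp; exact hγ⟩
      · rintro r ⟨w, hwU, hwne, rfl⟩
        have hnw : (0:ℝ) < ‖w‖ := norm_pos_iff.mpr hwne
        set u : U := ‖w‖⁻¹ • ⟨w, hwU⟩ with hu
        have hunorm : ‖u‖ = 1 := by
          rw [hu, norm_smul, norm_inv, norm_norm]
          have : ‖(⟨w, hwU⟩ : U)‖ = ‖w‖ := rfl
          rw [this]
          field_simp
        have humem : u ∈ Metric.sphere (0:U) 1 := by
          rw [mem_sphere_zero_iff_norm]; exact hunorm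
        have h3 : γ ≤ ‖(P (u : X) : X)‖ := hmin humem
        have hcoe : ((u : X)) = ‖w‖⁻¹ • w := rfl
        have hval : ‖(P (u : X) : X)‖ = ‖(P w : X)‖ / ‖w‖ := by
          rw [hcoe, map_smul]
          have : ((‖w‖⁻¹ • P w : W) : X) = ‖w‖⁻¹ • (P w : X) := rfl
          rw [this, norm_smul, norm_inv, norm_norm]
          field_simp
        rw [hval] at h3
        exact h3
    rw [hleast.csInf_eq]
    -- now show ‖I‖ = 1 / γ
    apply le_antisymm
    · apply ContinuousLinearMap.opNorm_le_bound _ (div_nonneg zero_le_one hγpos.le)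
      intro x
      rcases eq_or_ne (I x) 0 with h0 | h0
      · rw [h0, norm_zero]
        exact mul_nonneg (div_nonneg zero_le_one hγpos.le) (norm_nonneg x)
      · have hwU : I x ∈ U := hIU x
        have hle : γ ≤ ‖(P (I x) : X)‖ / ‖I x‖ := hleast.2 ⟨I x, hwU, h0, rfl⟩
        have hnw : (0:ℝ) < ‖I x‖ := norm_pos_iff.mpr h0
        have h1 : γ * ‖I x‖ ≤ ‖(P (I x) : X)‖ := by
          calc γ * ‖I x‖ ≤ (‖(P (I x) : X)‖ / ‖I x‖) * ‖I x‖ :=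
                mul_le_mul_of_nonneg_right hle (norm_nonneg _)
            _ = ‖(P (I x) : X)‖ := by field_simp
        have h2 : ‖(P (I x) : X)‖ ≤ ‖x‖ := by rw [hPI]; exact hPnorm x
        rw [one_div, inv_mul_eq_div, le_div_iff₀ hγpos]
        linarith [mul_comm ‖I x‖ γ]
    · -- lower bound via x = P w₀
      set x : X := (P (w₀ : X) : X) with hx
      have hxW : x - (w₀ : X) ∈ Wᗮ := by
        have := Submodule.sub_starProjection_mem_orthogonal (K := W) (w₀ : X)
        have h2 : x - (w₀ : X) = -((w₀ : X) - (P (w₀ : X) : X)) := by rw [hx, neg_sub]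
        rw [h2]
        exact neg_mem this
      have hIx : I x = (w₀ : X) := by
        have h1 : I x - (w₀ : X) ∈ U := Submodule.sub_mem U (hIU x) w₀.2
        have h2 : ∀ m, ℓ m (I x - (w₀ : X)) = 0 := by
          intro m
          rw [map_sub, hI x m]
          have := (hperp _).mp hxW m
          rw [map_sub] at this
          linarith
        exact sub_eq_zero.mp (huni _ h1 h2)
      have hxnorm : ‖x‖ = γ := rfl
      have := I.ratio_le_opNorm x
      rw [hIx, hw₀norm, hxnorm] at this
      exact this
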